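/- Let X be a real Banach space equipped with a uniformly continuous duality selection map J with modulus of continuity ω. Let E₁, E₂ ⊆ X, and let Q₁, Q₂ : X → X be sunny nonexpansive retractions onto E₁ and E₂ respectively, with ‖Q₁0‖ ≤ d and ‖Q₂0‖ ≤ d. Fix ε, b > 0 and set R := 2(2b + d) + 1 and a := min{1, ω(R, ε/R)}. If H*[E₁, E₂, a] holds, then for every x ∈ X with ‖x‖ ≤ b we have ‖Q₁x − Q₂x‖² ≤ ε. -/

import Mathlib

lemma dual_unique {X : Type*} [NormedAddCommGroup X] [NormedSpace ℝ X]
    (J : X → StrongDual ℝ X) (ω : ℝ → ℝ → ℝ)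
    (hJ : ∀ x : X, J x x = ‖x‖ ^ 2 ∧ ‖J x‖ = ‖x‖)
    (hωpos : ∀ b ε : ℝ, 0 < b → 0 < ε → 0 < ω b ε)
    (hω : ∀ b ε : ℝ, 0 < b → 0 < ε → ∀ x y : X, ‖x‖ ≤ b → ‖y‖ ≤ b →
      ‖x - y‖ ≤ ω b ε → ‖J x - J y‖ ≤ ε)
    (w : X) (j : StrongDual ℝ X) (hj1 : j w = ‖w‖ ^ 2) (hj2 : ‖j‖ = ‖w‖) :
    j = J w := by
  have key : ∀ δ : ℝ, 0 < δ → ‖j - J w‖ ≤ δ := by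
    intro δ hδ
    have hD : (0:ℝ) < ‖w‖ + 1 := by positivity
    set t₀ : ℝ := min (ω (‖w‖ + 1) δ) 1 with ht₀
    have ht₀pos : 0 < t₀ := lt_min (hωpos _ _ hD hδ) one_pos
    have ht₀le1 : t₀ ≤ 1 := min_le_right _ _
    have hptwise : ∀ u : X, (j - J w) u ≤ δ * ‖u‖ := by
      intro u
      rcases eq_or_ne u 0 with rfl | hu
      · simp
      have hu' : 0 < ‖u‖ := norm_pos_iff.mpr hu
      set s : ℝ := t₀ / ‖u‖ with hs
      have hspos : 0 < s := div_pos ht₀pos hu'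
      set v : X := w + s • u with hv
      have hvw : v - w = s • u := by simp [hv]
      have hnvw : ‖v - w‖ = t₀ := by
        rw [hvw, norm_smul, Real.norm_eq_abs, abs_of_pos hspos, hs,
          div_mul_cancel₀ _ (ne_of_gt hu')]
      have h1 : j v ≤ ‖w‖ * ‖v‖ := by
        have h0 := j.le_opNorm v
        rw [Real.norm_eq_abs, hj2] at h0
        exact (le_abs_self _).trans h0
      have h2 : (J v) w ≤ ‖v‖ * ‖w‖ := by
        have h0 := (J v).le_opNorm w
        rw [Real.norm_eq_abs, (hJ v).2] at h0
        exact (le_abs_self _).trans h0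
      have hJvv : (J v) v = ‖v‖ ^ 2 := (hJ v).1
      have hkey : (j - J v) (v - w) ≤ 0 := by
        have heq : (j - J v) (v - w) = j v - ‖w‖ ^ 2 - ‖v‖ ^ 2 + (J v) w := by
          simp [map_sub, hj1, hJvv]; ring
        rw [heq]
        nlinarith [sq_nonneg (‖v‖ - ‖w‖)]
      have hkey2 : (j - J v) u ≤ 0 := by
        have heq : (j - J v) (v - w) = s * ((j - J v) u) := by
          rw [hvw, map_smul]; simp
        nlinarith [hkey]
      have hvb : ‖v‖ ≤ ‖w‖ + 1 := by
        have h5 : ‖v‖ ≤ ‖w‖ + ‖v - w‖ := by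
          have := norm_add_le w (v - w)
          simpa using this
        rw [hnvw] at h5
        linarith
      have hwb : ‖w‖ ≤ ‖w‖ + 1 := by linarith
      have hdist : ‖v - w‖ ≤ ω (‖w‖ + 1) δ := by
        rw [hnvw]; exact min_le_left _ _
      have hcont : ‖J v - J w‖ ≤ δ := hω _ _ hD hδ v w hvb hwb hdist
      have h3 : (J v - J w) u ≤ δ * ‖u‖ := by
        have h0 := (J v - J w).le_opNorm u
        rw [Real.norm_eq_abs] at h0
        have := (le_abs_self ((J v - J w) u)).trans h0
        nlinarith [norm_nonneg u]
      have heq : (j - J w) u = (j - J v) u + (J v - J w) u := by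
        simp only [ContinuousLinearMap.sub_apply]; ring
      rw [heq]
      linarith
    have hb : ∀ u : X, ‖(j - J w) u‖ ≤ δ * ‖u‖ := by
      intro u
      rw [Real.norm_eq_abs, abs_le]
      constructor
      · have := hptwise (-u)
        simp only [map_neg, norm_neg] at this
        linarith
      · exact hptwise u
    exact ContinuousLinearMap.opNorm_le_bound _ hδ.le hb
  have h0 : ‖j - J w‖ ≤ 0 := by
    refine le_of_forall_pos_le_add ?_
    intro δ hδ
    simpa using key δ hδ
  exact sub_eq_zero.mp (norm_le_zero_iff.mp h0)

set_option maxHeartbeats 1000000 in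
/-- Modulus-of-uniqueness lemma for sunny nonexpansive retractions: if
H*[E₁,E₂,a] holds for a := min{1, ω(R, ε/R)} with R := 2(2b + d) + 1, then
‖Q₁x − Q₂x‖² ≤ ε for all x with ‖x‖ ≤ b. -/
theorem stmt_15 {X : Type*} [NormedAddCommGroup X] [NormedSpace ℝ X] [CompleteSpace X]
    (J : X → StrongDual ℝ X) (ω : ℝ → ℝ → ℝ)
    (hJ : ∀ x : X, J x x = ‖x‖ ^ 2 ∧ ‖J x‖ = ‖x‖)
    (hωpos : ∀ b ε : ℝ, 0 < b → 0 < ε → 0 < ω b ε)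
    (hω : ∀ b ε : ℝ, 0 < b → 0 < ε → ∀ x y : X, ‖x‖ ≤ b → ‖y‖ ≤ b →
      ‖x - y‖ ≤ ω b ε → ‖J x - J y‖ ≤ ε)
    (E₁ E₂ : Set X) (Q₁ Q₂ : X → X) (d : ℝ)
    (hQ₁range : ∀ x : X, Q₁ x ∈ E₁) (hQ₁id : ∀ x ∈ E₁, Q₁ x = x)
    (hQ₁ne : ∀ x y : X, ‖Q₁ x - Q₁ y‖ ≤ ‖x - y‖)
    (hQ₁sunny : ∀ x : X, ∀ y ∈ E₁, J (y - Q₁ x) (x - Q₁ x) ≤ 0)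
    (hQ₂range : ∀ x : X, Q₂ x ∈ E₂) (hQ₂id : ∀ x ∈ E₂, Q₂ x = x)
    (hQ₂ne : ∀ x y : X, ‖Q₂ x - Q₂ y‖ ≤ ‖x - y‖)
    (hQ₂sunny : ∀ x : X, ∀ y ∈ E₂, J (y - Q₂ x) (x - Q₂ x) ≤ 0)
    (hd₁ : ‖Q₁ 0‖ ≤ d) (hd₂ : ‖Q₂ 0‖ ≤ d)
    (ε b : ℝ) (hε : 0 < ε) (hb : 0 < b)
    (hH₁ : ∀ x ∈ E₁, ∃ y ∈ E₂,
      ‖x - y‖ ≤ min 1 (ω (2 * (2 * b + d) + 1) (ε / (2 * (2 * b + d) + 1))))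
    (hH₂ : ∀ y ∈ E₂, ∃ x ∈ E₁,
      ‖x - y‖ ≤ min 1 (ω (2 * (2 * b + d) + 1) (ε / (2 * (2 * b + d) + 1))))
    (x : X) (hx : ‖x‖ ≤ b) :
    ‖Q₁ x - Q₂ x‖ ^ 2 ≤ ε := by
  set p : X := Q₁ x with hp
  set q : X := Q₂ x with hq
  have hd0 : 0 ≤ d := le_trans (norm_nonneg _) hd₁
  set R : ℝ := 2 * (2 * b + d) + 1 with hR
  have hRpos : 0 < R := by positivity
  have hεR : 0 < ε / R := div_pos hε hRpos
  -- norm bounds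
  have hpb : ‖p‖ ≤ b + d := by
    have h1 : ‖p - Q₁ 0‖ ≤ ‖x - 0‖ := hQ₁ne x 0
    rw [sub_zero] at h1
    have h2 : ‖p‖ ≤ ‖p - Q₁ 0‖ + ‖Q₁ 0‖ := by
      have := norm_add_le (p - Q₁ 0) (Q₁ 0)
      simpa using this
    linarith
  have hqb : ‖q‖ ≤ b + d := by
    have h1 : ‖q - Q₂ 0‖ ≤ ‖x - 0‖ := hQ₂ne x 0
    rw [sub_zero] at h1
    have h2 : ‖q‖ ≤ ‖q - Q₂ 0‖ + ‖Q₂ 0‖ := by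
      have := norm_add_le (q - Q₂ 0) (Q₂ 0)
      simpa using this
    linarith
  have hxp : ‖x - p‖ ≤ 2 * b + d := by
    have := norm_sub_le x p
    linarith
  have hxq : ‖x - q‖ ≤ 2 * b + d := by
    have := norm_sub_le x q
    linarith
  have hpq : ‖p - q‖ ≤ 2 * (b + d) := by
    have := norm_sub_le p q
    linarith
  -- nearby points from H*
  obtain ⟨y', hy'E, hy'⟩ := hH₁ p (hQ₁range x)
  obtain ⟨x', hx'E, hx'⟩ := hH₂ q (hQ₂range x)
  have hsun₁ : J (x' - p) (x - p) ≤ 0 := hQ₁sunny x x' hx'E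
  have hsun₂ : J (y' - q) (x - q) ≤ 0 := hQ₂sunny x y' hy'E
  have hy'1 : ‖p - y'‖ ≤ 1 := hy'.trans (min_le_left _ _)
  have hy'ω : ‖p - y'‖ ≤ ω R (ε / R) := hy'.trans (min_le_right _ _)
  have hx'1 : ‖x' - q‖ ≤ 1 := hx'.trans (min_le_left _ _)
  have hx'ω : ‖x' - q‖ ≤ ω R (ε / R) := hx'.trans (min_le_right _ _)
  -- continuity estimates
  have hc₁ : ‖J (x' - p) - J (q - p)‖ ≤ ε / R := by
    apply hω R (ε / R) hRpos hεR
    · have h1 : ‖x' - p‖ ≤ ‖x' - q‖ + ‖q - p‖ := by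
        have := norm_sub_le_norm_sub_add_norm_sub x' q p
        linarith [norm_add_le (x' - q) (q - p), norm_sub_le x' q]
      have h2 : ‖q - p‖ ≤ 2 * (b + d) := by
        rw [norm_sub_rev]; exact hpq
      linarith
    · have h2 : ‖q - p‖ ≤ 2 * (b + d) := by
        rw [norm_sub_rev]; exact hpq
      linarith
    · have : (x' - p) - (q - p) = x' - q := by abel
      rw [this]; exact hx'ω
  have hc₂ : ‖J (y' - q) - J (p - q)‖ ≤ ε / R := by
    apply hω R (ε / R) hRpos hεR
    · have h1 : ‖y' - q‖ ≤ ‖y' - p‖ + ‖p - q‖ :=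
        norm_sub_le_norm_sub_add_norm_sub y' p q
      have h2 : ‖y' - p‖ ≤ 1 := by rw [norm_sub_rev]; exact hy'1
      linarith
    · linarith
    · have : (y' - q) - (p - q) = -(p - y') := by abel
      rw [this, norm_neg]; exact hy'ω
  -- bounds on J(q-p)(x-p) and J(p-q)(x-q)
  have key₁ : J (q - p) (x - p) ≤ ε / R * (2 * b + d) := by
    have heq : J (q - p) (x - p) = J (x' - p) (x - p) + (J (q - p) - J (x' - p)) (x - p) := by
      simp only [ContinuousLinearMap.sub_apply]; ring
    have hb1 : (J (q - p) - J (x' - p)) (x - p) ≤ ε / R * (2 * b + d) := by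
      have h0 := (J (q - p) - J (x' - p)).le_opNorm (x - p)
      rw [Real.norm_eq_abs] at h0
      have h1 := (le_abs_self ((J (q - p) - J (x' - p)) (x - p))).trans h0
      have h2 : ‖J (q - p) - J (x' - p)‖ ≤ ε / R := by
        rw [norm_sub_rev]; exact hc₁
      nlinarith [norm_nonneg (x - p), hεR.le]
    linarith [heq ▸ add_le_add hsun₁ hb1]
  have key₂ : J (p - q) (x - q) ≤ ε / R * (2 * b + d) := by
    have heq : J (p - q) (x - q) = J (y' - q) (x - q) + (J (p - q) - J (y' - q)) (x - q) := by
      simp only [ContinuousLinearMap.sub_apply]; ring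
    have hb1 : (J (p - q) - J (y' - q)) (x - q) ≤ ε / R * (2 * b + d) := by
      have h0 := (J (p - q) - J (y' - q)).le_opNorm (x - q)
      rw [Real.norm_eq_abs] at h0
      have h1 := (le_abs_self ((J (p - q) - J (y' - q)) (x - q))).trans h0
      have h2 : ‖J (p - q) - J (y' - q)‖ ≤ ε / R := by
        rw [norm_sub_rev]; exact hc₂
      nlinarith [norm_nonneg (x - q), hεR.le]
    linarith [heq ▸ add_le_add hsun₂ hb1]
  -- oddness: J(q-p) = -J(p-q)
  have hodd : J (q - p) = -(J (p - q)) := by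
    have := dual_unique J ω hJ hωpos hω (q - p) (-(J (p - q))) ?_ ?_
    · exact this.symm
    · have hneg : q - p = -(p - q) := by abel
      have h1 : J (p - q) (q - p) = -(‖p - q‖ ^ 2) := by
        rw [hneg, map_neg, (hJ (p - q)).1]
      simp only [ContinuousLinearMap.neg_apply, h1, neg_neg]
      rw [norm_sub_rev]
    · rw [norm_neg, (hJ (p - q)).2, norm_sub_rev]
  -- final computation
  have hfin : ‖p - q‖ ^ 2 = J (p - q) (x - q) + J (q - p) (x - p) := by
    have h2 : p - q = (x - q) - (x - p) := by abel
    calc ‖p - q‖ ^ 2 = J (p - q) (p - q) := ((hJ (p - q)).1).symm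
    _ = J (p - q) ((x - q) - (x - p)) := by rw [← h2]
    _ = J (p - q) (x - q) - J (p - q) (x - p) := by rw [map_sub]
    _ = J (p - q) (x - q) + J (q - p) (x - p) := by
        rw [hodd, ContinuousLinearMap.neg_apply]; ring
  have hend : 2 * (ε / R * (2 * b + d)) ≤ ε := by
    have h1 : 2 * (ε / R * (2 * b + d)) = ε * (2 * (2 * b + d)) / R := by ring
    rw [h1, div_le_iff₀ hRpos]
    have h2 : 2 * (2 * b + d) ≤ R := by rw [hR]; linarith
    exact mul_le_mul_of_nonneg_left h2 hε.le
  show ‖p - q‖ ^ 2 ≤ ε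
  rw [hfin]
  linarith
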